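/- Let X be a Banach space and K, L ⊆ X* nonempty w*-compact sets. Then Sz(K ∪ L) = max{Sz(K), Sz(L)}. -/

import Mathlib

open NormedSpace

noncomputable def derivIter {α : Type*} (d : Set α → Set α) (K : Set α) : Ordinal → Set α :=
  fun ξ => Ordinal.limitRecOn ξ K (fun _ ih => d ih)
    (fun o _ ih => ⋂ ζ : Set.Iio o, ih ζ.1 ζ.2)

/-- The Szlenk slicing derivation: `s_ε(K)` removes from `K` every point contained in
a `w*`-open set whose intersection with `K` has norm diameter at most `ε`. -/
def szSlice {X : Type*} [NormedAddCommGroup X] [NormedSpace ℝ X] (ε : ℝ)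
    (K : Set (StrongDual ℝ X)) : Set (StrongDual ℝ X) :=
  {f ∈ K | ∀ W : Set (WeakDual ℝ X), IsOpen W → StrongDual.toWeakDual f ∈ W →
    ε < Metric.diam (K ∩ (fun g => StrongDual.toWeakDual g) ⁻¹' W)}

section Aux

lemma derivIter_zero {α : Type*} (d : Set α → Set α) (K : Set α) :
    derivIter d K 0 = K :=
  Ordinal.limitRecOn_zero _ _ _

lemma derivIter_succ {α : Type*} (d : Set α → Set α) (K : Set α) (o : Ordinal) :
    derivIter d K (Order.succ o) = d (derivIter d K o) :=
  Ordinal.limitRecOn_succ _ _ _ _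

lemma derivIter_limit {α : Type*} (d : Set α → Set α) (K : Set α) (o : Ordinal)
    (ho : Order.IsSuccLimit o) :
    derivIter d K o = ⋂ ζ : Set.Iio o, derivIter d K ζ.1 :=
  Ordinal.limitRecOn_limit _ _ _ _ ho

lemma derivIter_antitone {α : Type*} {d : Set α → Set α} (hd : ∀ A, d A ⊆ A) (K : Set α) :
    ∀ ξ ζ : Ordinal, ζ ≤ ξ → derivIter d K ξ ⊆ derivIter d K ζ := by
  intro ξ
  induction ξ using Ordinal.limitRecOn with
  | zero =>
    intro ζ hζ
    rw [nonpos_iff_eq_zero.mp hζ]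
  | add_one o ih =>
    rw [Ordinal.add_one_eq_succ]
    intro ζ hζ
    rcases hζ.lt_or_eq with h | h
    · rw [derivIter_succ]
      exact (hd _).trans (ih ζ (Order.lt_succ_iff.mp h))
    · rw [h]
  | limit o ho ih =>
    intro ζ hζ
    rcases hζ.lt_or_eq with h | h
    · rw [derivIter_limit _ _ _ ho]
      exact Set.iInter_subset_of_subset ⟨ζ, h⟩ subset_rfl
    · rw [h]

variable {X : Type*} [NormedAddCommGroup X] [NormedSpace ℝ X]

lemma szSlice_subset (ε : ℝ) (K : Set (StrongDual ℝ X)) : szSlice ε K ⊆ K :=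
  fun _ hf => hf.1

lemma derivIter_szSlice_subset (ε : ℝ) (K : Set (StrongDual ℝ X)) (ξ : Ordinal) :
    derivIter (szSlice ε) K ξ ⊆ K := by
  have := derivIter_antitone (fun A => szSlice_subset ε A) K ξ 0 (zero_le (a := ξ))
  rwa [derivIter_zero] at this

lemma bounded_of_wstar_compact [CompleteSpace X] {K : Set (StrongDual ℝ X)}
    (hKc : IsCompact ((fun f => StrongDual.toWeakDual f) '' K)) :
    Bornology.IsBounded K := by
  have h : ∀ x : X, ∃ C, ∀ i : K, ‖(i : StrongDual ℝ X) x‖ ≤ C := by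
    intro x
    have hc : IsCompact ((fun φ : WeakDual ℝ X => φ x) ''
        ((fun f => StrongDual.toWeakDual f) '' K)) :=
      hKc.image (WeakDual.eval_continuous x)
    obtain ⟨C, hC⟩ := hc.isBounded.exists_norm_le
    exact ⟨C, fun i => hC _ ⟨_, ⟨i.1, i.2, rfl⟩, rfl⟩⟩
  obtain ⟨C', hC'⟩ := banach_steinhaus (g := fun i : K => (i : StrongDual ℝ X)) h
  refine (Metric.isBounded_closedBall (x := (0 : StrongDual ℝ X)) (r := C')).subset ?_
  intro f hf
  simpa [mem_closedBall_zero_iff] using hC' ⟨f, hf⟩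

lemma szSlice_mono {ε : ℝ} {A B : Set (StrongDual ℝ X)} (hB : Bornology.IsBounded B)
    (hAB : A ⊆ B) : szSlice ε A ⊆ szSlice ε B := by
  rintro f ⟨hfA, hf⟩
  refine ⟨hAB hfA, fun W hW hfW => ?_⟩
  exact lt_of_lt_of_le (hf W hW hfW)
    (Metric.diam_mono (Set.inter_subset_inter_left _ hAB)
      (hB.subset Set.inter_subset_left))

lemma derivIter_szSlice_mono {ε : ℝ} {A B : Set (StrongDual ℝ X)} (hB : Bornology.IsBounded B)
    (hAB : A ⊆ B) :
    ∀ ξ : Ordinal, derivIter (szSlice ε) A ξ ⊆ derivIter (szSlice ε) B ξ := by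
  intro ξ
  induction ξ using Ordinal.limitRecOn with
  | zero => rw [derivIter_zero, derivIter_zero]; exact hAB
  | add_one o ih =>
    rw [Ordinal.add_one_eq_succ]
    rw [derivIter_succ, derivIter_succ]
    exact szSlice_mono (hB.subset (derivIter_szSlice_subset ε B o)) ih
  | limit o ho ih =>
    rw [derivIter_limit _ _ _ ho, derivIter_limit _ _ _ ho]
    exact Set.iInter_mono fun ζ => ih ζ.1 ζ.2

lemma image_szSlice_eq (ε : ℝ) (A : Set (StrongDual ℝ X)) :
    szSlice ε A = A ∩ (fun f => StrongDual.toWeakDual f) ⁻¹'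
      (⋃₀ {W : Set (WeakDual ℝ X) |
        IsOpen W ∧ Metric.diam (A ∩ (fun g => StrongDual.toWeakDual g) ⁻¹' W) ≤ ε})ᶜ := by
  ext f
  simp only [szSlice, Set.mem_setOf_eq, Set.mem_inter_iff, Set.mem_preimage,
    Set.mem_compl_iff, Set.mem_sUnion]
  constructor
  · rintro ⟨hA, h⟩
    exact ⟨hA, fun ⟨W, ⟨hWo, hWd⟩, hfW⟩ => absurd (h W hWo hfW) (not_lt.mpr hWd)⟩
  · rintro ⟨hA, h⟩
    exact ⟨hA, fun W hWo hfW => lt_of_not_ge fun hle => h ⟨W, ⟨hWo, hle⟩, hfW⟩⟩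

lemma image_szSlice_compact {ε : ℝ} {A : Set (StrongDual ℝ X)}
    (hA : IsCompact ((fun f => StrongDual.toWeakDual f) '' A)) :
    IsCompact ((fun f => StrongDual.toWeakDual f) '' szSlice ε A) := by
  rw [image_szSlice_eq, Set.image_inter_preimage]
  exact hA.inter_right (isOpen_sUnion fun W hW => hW.1).isClosed_compl

lemma derivIter_image_compact {ε : ℝ} {A : Set (StrongDual ℝ X)}
    (hA : IsCompact ((fun f => StrongDual.toWeakDual f) '' A)) :
    ∀ ξ : Ordinal, IsCompact ((fun f => StrongDual.toWeakDual f) '' derivIter (szSlice ε) A ξ) := by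
  intro ξ
  induction ξ using Ordinal.limitRecOn with
  | zero => rwa [derivIter_zero]
  | add_one o ih =>
    rw [Ordinal.add_one_eq_succ]
    rw [derivIter_succ]
    exact image_szSlice_compact ih
  | limit o ho ih =>
    rw [derivIter_limit _ _ _ ho,
      Set.image_iInter (StrongDual.toWeakDual (𝕜 := ℝ) (E := X)).bijective]
    exact IsCompact.of_isClosed_subset (ih 0 ho.pos)
      (isClosed_iInter fun ζ => (ih ζ.1 ζ.2).isClosed)
      (Set.iInter_subset _ (⟨0, ho.pos⟩ : Set.Iio o))

lemma szSlice_union_subset {ε : ℝ} (hε : 0 < ε) {A B : Set (StrongDual ℝ X)}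
    (hA : IsCompact ((fun f => StrongDual.toWeakDual f) '' A))
    (hB : IsCompact ((fun f => StrongDual.toWeakDual f) '' B))
    (hAb : Bornology.IsBounded A) (hBb : Bornology.IsBounded B) :
    szSlice ε (A ∪ B) ⊆ szSlice (ε / 2) A ∪ szSlice (ε / 2) B := by
  intro f hf
  by_contra hcon
  rw [Set.mem_union] at hcon
  push_neg at hcon
  obtain ⟨hfA, hfB⟩ := hcon
  obtain ⟨hfAB, hfall⟩ := hf
  have key : ∀ S : Set (StrongDual ℝ X), IsCompact ((fun f => StrongDual.toWeakDual f) '' S) →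
      f ∉ szSlice (ε / 2) S →
      ∃ W : Set (WeakDual ℝ X), IsOpen W ∧ StrongDual.toWeakDual f ∈ W ∧
        Metric.diam (insert f (S ∩ (fun g => StrongDual.toWeakDual g) ⁻¹' W)) ≤ ε / 2 := by
    intro S hS hfS
    by_cases hfmem : f ∈ S
    · simp only [szSlice, Set.mem_setOf_eq, not_and, not_forall, not_lt] at hfS
      obtain ⟨W, hWo, hfW, hWd⟩ := hfS hfmem
      refine ⟨W, hWo, hfW, ?_⟩
      rwa [Set.insert_eq_self.mpr (Set.mem_inter hfmem
        (show f ∈ (fun g => StrongDual.toWeakDual g) ⁻¹' W from hfW))]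
    · refine ⟨((fun f => StrongDual.toWeakDual f) '' S)ᶜ, hS.isClosed.isOpen_compl, ?_, ?_⟩
      · simp only [Set.mem_compl_iff, Set.mem_image, not_exists, not_and]
        intro g hgS hge
        exact hfmem
          ((StrongDual.toWeakDual (𝕜 := ℝ) (E := X)).injective hge ▸ hgS)
      · have hempty : S ∩ (fun g => StrongDual.toWeakDual g) ⁻¹'
            ((fun f => StrongDual.toWeakDual f) '' S)ᶜ = ∅ := by
          ext g
          simp only [Set.mem_inter_iff, Set.mem_preimage, Set.mem_compl_iff,
            Set.mem_empty_iff_false, iff_false]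
          rintro ⟨hgS, hgc⟩
          exact hgc ⟨g, hgS, rfl⟩
        rw [hempty]
        simp [Metric.diam_singleton]
        linarith
  obtain ⟨WA, hWAo, hfWA, hWAd⟩ := key A hA hfA
  obtain ⟨WB, hWBo, hfWB, hWBd⟩ := key B hB hfB
  have hlt := hfall (WA ∩ WB) (hWAo.inter hWBo) ⟨hfWA, hfWB⟩
  have hsub : (A ∪ B) ∩ (fun g => StrongDual.toWeakDual g) ⁻¹' (WA ∩ WB) ⊆
      insert f (A ∩ (fun g => StrongDual.toWeakDual g) ⁻¹' WA) ∪
        insert f (B ∩ (fun g => StrongDual.toWeakDual g) ⁻¹' WB) := by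
    rintro g ⟨hg | hg, hgW⟩
    · exact Or.inl (Set.mem_insert_iff.mpr (Or.inr ⟨hg, hgW.1⟩))
    · exact Or.inr (Set.mem_insert_iff.mpr (Or.inr ⟨hg, hgW.2⟩))
  have hbdd : Bornology.IsBounded
      (insert f (A ∩ (fun g => StrongDual.toWeakDual g) ⁻¹' WA) ∪
        insert f (B ∩ (fun g => StrongDual.toWeakDual g) ⁻¹' WB)) :=
    ((hAb.subset Set.inter_subset_left).insert f).union
      ((hBb.subset Set.inter_subset_left).insert f)
  have h1 := Metric.diam_mono hsub hbdd
  have h2 := Metric.diam_union (Set.mem_insert f _) (Set.mem_insert f _)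
    (s := insert f (A ∩ (fun g => StrongDual.toWeakDual g) ⁻¹' WA))
    (t := insert f (B ∩ (fun g => StrongDual.toWeakDual g) ⁻¹' WB))
  rw [dist_self] at h2
  linarith

lemma derivIter_union_subset {ε : ℝ} (hε : 0 < ε) {A B : Set (StrongDual ℝ X)}
    (hA : IsCompact ((fun f => StrongDual.toWeakDual f) '' A))
    (hB : IsCompact ((fun f => StrongDual.toWeakDual f) '' B))
    (hAb : Bornology.IsBounded A) (hBb : Bornology.IsBounded B) :
    ∀ ξ : Ordinal, derivIter (szSlice ε) (A ∪ B) ξ ⊆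
      derivIter (szSlice (ε / 2)) A ξ ∪ derivIter (szSlice (ε / 2)) B ξ := by
  intro ξ
  induction ξ using Ordinal.limitRecOn with
  | zero => rw [derivIter_zero, derivIter_zero, derivIter_zero]
  | add_one o ih =>
    rw [Ordinal.add_one_eq_succ]
    rw [derivIter_succ, derivIter_succ, derivIter_succ]
    refine (szSlice_mono ?_ ih).trans
      (szSlice_union_subset hε (derivIter_image_compact hA o)
        (derivIter_image_compact hB o)
        (hAb.subset (derivIter_szSlice_subset _ _ _))
        (hBb.subset (derivIter_szSlice_subset _ _ _)))
    exact (hAb.subset (derivIter_szSlice_subset _ _ _)).union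
      (hBb.subset (derivIter_szSlice_subset _ _ _))
  | limit o ho ih =>
    rw [derivIter_limit _ _ _ ho, derivIter_limit _ _ _ ho, derivIter_limit _ _ _ ho]
    intro x hx
    rw [Set.mem_iInter] at hx
    by_contra hcon
    rw [Set.mem_union, Set.mem_iInter, Set.mem_iInter] at hcon
    push_neg at hcon
    obtain ⟨⟨⟨ζ1, hζ1⟩, hx1⟩, ⟨⟨ζ2, hζ2⟩, hx2⟩⟩ := hcon
    have hζ : max ζ1 ζ2 < o := max_lt hζ1 hζ2
    have hmem := ih (max ζ1 ζ2) hζ (hx ⟨max ζ1 ζ2, hζ⟩)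
    rcases hmem with h | h
    · exact hx1 (derivIter_antitone (fun A => szSlice_subset _ A) A (max ζ1 ζ2) ζ1
        (le_max_left _ _) h)
    · exact hx2 (derivIter_antitone (fun A => szSlice_subset _ A) B (max ζ1 ζ2) ζ2
        (le_max_right _ _) h)

end Aux

/-- `Sz(K ∪ L) = max (Sz K) (Sz L)`, expressed via: for every ordinal `ξ`,
`Sz(K ∪ L) > ξ` iff `Sz K > ξ` or `Sz L > ξ`. -/
theorem szlenk_union {X : Type*} [NormedAddCommGroup X] [NormedSpace ℝ X]
    [CompleteSpace X] (K L : Set (StrongDual ℝ X)) (hK : K.Nonempty) (hL : L.Nonempty)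
    (hKc : IsCompact ((fun f => StrongDual.toWeakDual f) '' K))
    (hLc : IsCompact ((fun f => StrongDual.toWeakDual f) '' L)) :
    ∀ ξ : Ordinal,
      (∃ ε : ℝ, 0 < ε ∧ (derivIter (szSlice ε) (K ∪ L) ξ).Nonempty) ↔
        ((∃ ε : ℝ, 0 < ε ∧ (derivIter (szSlice ε) K ξ).Nonempty) ∨
          (∃ ε : ℝ, 0 < ε ∧ (derivIter (szSlice ε) L ξ).Nonempty)) := by
  intro ξ
  have hKb := bounded_of_wstar_compact hKc
  have hLb := bounded_of_wstar_compact hLc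
  constructor
  · rintro ⟨ε, hε, x, hx⟩
    rcases derivIter_union_subset hε hKc hLc hKb hLb ξ hx with h | h
    · exact Or.inl ⟨ε / 2, half_pos hε, x, h⟩
    · exact Or.inr ⟨ε / 2, half_pos hε, x, h⟩
  · rintro (⟨ε, hε, x, hx⟩ | ⟨ε, hε, x, hx⟩)
    · exact ⟨ε, hε, x,
        derivIter_szSlice_mono (hKb.union hLb) Set.subset_union_left ξ hx⟩
    · exact ⟨ε, hε, x,
        derivIter_szSlice_mono (hKb.union hLb) Set.subset_union_right ξ hx⟩
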